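/- (3D version of Proposition 1.) Let $p \in 2\mathbb{N}\setminus\{0\}$, $n$ even, $\hat{\mathbf{g}}_t \in \mathbb{C}^{(np)^3}$ indexed over $[\![-np/2+1; np/2]\!]^3$, and let $\mathbf{v}_p \in \mathbb{C}^{(np)^3}$ be the $p$-fold zero-padding of $\mathbf{v} \in \mathbb{C}^{n^3}$ (supported on $[\![-n/2+1; n/2]\!]^3$). Then for all $\mathbf{k} \in [\![-n/2+1; n/2]\!]^3$: $\big(\mathbf{F}^{-1}(\hat{\mathbf{g}}_t \odot \mathbf{F}\mathbf{v}_p)\big)[\mathbf{k}] = \big(\mathbf{F}^{-1}(\hat{\mathbf{g}}^m_t \odot \mathbf{F}\mathbf{v}_2)\big)[\mathbf{k}]$, where $\mathbf{v}_2$ is the twofold zero-padding of $\mathbf{v}$ and $\mathbf{g}^m_t[\mathbf{k}] = \frac{8}{p^3} \sum_{\mathbf{s} \in [\![0; p/2-1]\!]^3} \mathbf{F}^{-1}\big(\hat{\mathbf{g}}_t[\tfrac{p}{2}\cdot - \mathbf{s}]\big)[\mathbf{k}]\, e^{-2\pi j \mathbf{k}^T\mathbf{s}/(np)}$. -/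

import Mathlib

open Complex

/-- The 3D index grid [[-N/2+1 ; N/2]]³. -/
noncomputable def cube3 (N : ℤ) : Finset (Fin 3 → ℤ) :=
  Fintype.piFinset fun _ => Finset.Icc (-N / 2 + 1) (N / 2)

/-- N³-point 3D DFT over the grid [[-N/2+1 ; N/2]]³. -/
noncomputable def dft3 (N : ℤ) (w : (Fin 3 → ℤ) → ℂ) (q : Fin 3 → ℤ) : ℂ :=
  ∑ k ∈ cube3 N, w k *
    Complex.exp (-(2 * (Real.pi : ℂ) * Complex.I * ((∑ i, k i * q i : ℤ) : ℂ) / (N : ℂ)))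

/-- N³-point 3D inverse DFT over the grid [[-N/2+1 ; N/2]]³. -/
noncomputable def idft3 (N : ℤ) (w : (Fin 3 → ℤ) → ℂ) (k : Fin 3 → ℤ) : ℂ :=
  (1 / (N : ℂ) ^ 3) * ∑ q ∈ cube3 N, w q *
    Complex.exp (2 * (Real.pi : ℂ) * Complex.I * ((∑ i, k i * q i : ℤ) : ℂ) / (N : ℂ))

open Finset in
lemma geom_line (N : ℕ) (hN : 0 < N) (a m : ℤ) :
    ∑ q ∈ Finset.Icc a (a + N - 1),
      Complex.exp (2 * (Real.pi : ℂ) * Complex.I * ((m * q : ℤ) : ℂ) / (N : ℂ)) =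
      if (N : ℤ) ∣ m then (N : ℂ) else 0 := by
  have hset : Finset.Icc a (a + N - 1) =
      (Finset.range N).map ⟨fun j : ℕ => a + (j : ℤ), show Function.Injective (fun j : ℕ => a + (j : ℤ)) from fun x y hxy => by
        exact_mod_cast add_left_cancel hxy⟩ := by
    ext q; simp only [Finset.mem_Icc, Finset.mem_map, Finset.mem_range,
      Function.Embedding.coeFn_mk]
    constructor
    · intro ⟨h1, h2⟩; exact ⟨(q - a).toNat, by omega, by omega⟩
    · rintro ⟨j, hj, rfl⟩; omega
  set z : ℂ := Complex.exp (2 * (Real.pi : ℂ) * Complex.I * (m : ℂ) / (N : ℂ)) with hz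
  have hNC : (N : ℂ) ≠ 0 := by exact_mod_cast hN.ne'
  have hterm : ∀ j : ℕ, Complex.exp (2 * (Real.pi : ℂ) * Complex.I * ((m * (a + j) : ℤ) : ℂ) / (N : ℂ))
      = Complex.exp (2 * (Real.pi : ℂ) * Complex.I * ((m * a : ℤ) : ℂ) / (N : ℂ)) * z ^ j := by
    intro j
    rw [hz, ← Complex.exp_nat_mul, ← Complex.exp_add]
    congr 1
    push_cast
    field_simp
  rw [hset, Finset.sum_map]
  simp only [Function.Embedding.coeFn_mk, hterm]
  rw [← Finset.mul_sum]
  by_cases hdvd : (N : ℤ) ∣ m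
  · obtain ⟨c, rfl⟩ := hdvd
    have h1 : Complex.exp (2 * (Real.pi : ℂ) * Complex.I * (((N : ℤ) * c * a : ℤ) : ℂ) / (N : ℂ)) = 1 := by
      rw [show 2 * (Real.pi : ℂ) * Complex.I * (((N : ℤ) * c * a : ℤ) : ℂ) / (N : ℂ)
          = (c * a : ℤ) * (2 * (Real.pi : ℂ) * Complex.I) by push_cast; field_simp]
      exact Complex.exp_int_mul_two_pi_mul_I _
    have h2 : z = 1 := by
      rw [hz, show 2 * (Real.pi : ℂ) * Complex.I * (((N : ℤ) * c : ℤ) : ℂ) / (N : ℂ)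
          = (c : ℤ) * (2 * (Real.pi : ℂ) * Complex.I) by push_cast; field_simp]
      exact Complex.exp_int_mul_two_pi_mul_I _
    rw [h1, h2, if_pos (dvd_mul_right (N:ℤ) c)]
    simp
  · have hz1 : z ≠ 1 := by
      rw [hz]
      intro hcon
      rw [Complex.exp_eq_one_iff] at hcon
      obtain ⟨c, hc⟩ := hcon
      apply hdvd
      have h2pi : (2 * (Real.pi : ℂ) * Complex.I) ≠ 0 := by
        simp [Real.pi_ne_zero, Complex.I_ne_zero]
      field_simp at hc
      have hm : (m : ℂ) = (c : ℂ) * N := mul_left_cancel₀ h2pi (by linear_combination (2 * (Real.pi : ℂ) * Complex.I) * hc)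
      exact ⟨c, by exact_mod_cast hm.trans (mul_comm _ _)⟩
    have hzN : z ^ N = 1 := by
      rw [hz, ← Complex.exp_nat_mul]
      rw [show (N : ℂ) * (2 * (Real.pi : ℂ) * Complex.I * (m : ℂ) / (N : ℂ))
          = (m : ℤ) * (2 * (Real.pi : ℂ) * Complex.I) by push_cast; field_simp]
      exact Complex.exp_int_mul_two_pi_mul_I _
    rw [geom_sum_eq hz1, hzN]
    simp [hdvd]

lemma cube3_two_n (n : ℕ) : cube3 (2 * (n:ℤ)) =
    Fintype.piFinset (fun _ : Fin 3 => Finset.Icc (-(n:ℤ) + 1) ((-(n:ℤ) + 1) + (2*n) - 1)) := by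
  unfold cube3
  congr 1
  funext _
  congr 1 <;> push_cast <;> omega

lemma orth3 (n : ℕ) (hn : 0 < n) (m : Fin 3 → ℤ) :
    ∑ q ∈ cube3 (2 * (n:ℤ)),
      Complex.exp (2 * (Real.pi : ℂ) * Complex.I * ((∑ i, m i * q i : ℤ) : ℂ) / ((2*n : ℕ) : ℂ)) =
      if ∀ i, (2 * (n:ℤ)) ∣ m i then ((2*n : ℕ) : ℂ) ^ 3 else 0 := by
  have hterm : ∀ q : Fin 3 → ℤ,
      Complex.exp (2 * (Real.pi : ℂ) * Complex.I * ((∑ i, m i * q i : ℤ) : ℂ) / ((2*n : ℕ) : ℂ)) =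
      ∏ i, Complex.exp (2 * (Real.pi : ℂ) * Complex.I * ((m i * q i : ℤ) : ℂ) / ((2*n : ℕ) : ℂ)) := by
    intro q
    rw [← Complex.exp_sum]
    congr 1
    rw [← Finset.sum_div, ← Finset.mul_sum]
    push_cast
    ring
  rw [cube3_two_n]
  simp only [hterm]
  rw [Finset.sum_prod_piFinset (Finset.Icc (-(n:ℤ) + 1) ((-(n:ℤ) + 1) + (2*n) - 1))
    (fun i x => Complex.exp (2 * (Real.pi : ℂ) * Complex.I * ((m i * x : ℤ) : ℂ) / ((2*n : ℕ) : ℂ)))]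
  have hfac : ∀ i : Fin 3, ∑ x ∈ Finset.Icc (-(n:ℤ) + 1) ((-(n:ℤ) + 1) + (2*n) - 1),
      Complex.exp (2 * (Real.pi : ℂ) * Complex.I * ((m i * x : ℤ) : ℂ) / ((2*n : ℕ) : ℂ)) =
      if ((2*n : ℕ) : ℤ) ∣ m i then ((2*n : ℕ) : ℂ) else 0 := fun i =>
    geom_line (2*n) (by omega) _ (m i)
  simp only [hfac]
  by_cases hall : ∀ i, (2 * (n:ℤ)) ∣ m i
  · rw [if_pos hall]
    have : ∀ i : Fin 3, (if ((2*n : ℕ) : ℤ) ∣ m i then ((2*n : ℕ) : ℂ) else 0) = ((2*n:ℕ):ℂ) :=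
      fun i => if_pos (by push_cast; exact hall i)
    simp only [this, Finset.prod_const]
    simp
  · rw [if_neg hall]
    push_neg at hall
    obtain ⟨i, hi⟩ := hall
    exact Finset.prod_eq_zero (Finset.mem_univ i) (if_neg (by push_cast; exact hi))

lemma key1 {h n e s : ℤ} (hh : 0 < h) (hs0 : 0 ≤ s) (hsh : s < h) :
    (-(n*h) + 1 ≤ h * e - s ∧ h * e - s ≤ n * h) ↔ (-n + 1 ≤ e ∧ e ≤ n) := by
  constructor
  · rintro ⟨h1, h2⟩
    constructor
    · have hlt : h * (-n) < h * e := by nlinarith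
      have := lt_of_mul_lt_mul_left hlt hh.le
      omega
    · have hlt : h * e < h * (n + 1) := by nlinarith
      have := lt_of_mul_lt_mul_left hlt hh.le
      omega
  · rintro ⟨h1, h2⟩
    constructor
    · nlinarith
    · nlinarith

lemma small_dvd_zero {N d : ℤ} (hN : 0 < N) (hdvd : N ∣ d) (h1 : -N < d) (h2 : d < N) :
    d = 0 := by
  obtain ⟨c, rfl⟩ := hdvd
  have hc1 : c < 1 := by
    by_contra hc
    push_neg at hc
    nlinarith
  have hc2 : -1 < c := by
    by_contra hc
    push_neg at hc
    nlinarith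
  have : c = 0 := by omega
  simp [this]

lemma reindex3 (n h : ℕ) (hn : 0 < n) (hh : 0 < h) (f : (Fin 3 → ℤ) → ℂ) :
    ∑ q ∈ cube3 ((n:ℤ) * (2*h)), f q =
      ∑ s ∈ Fintype.piFinset (fun _ : Fin 3 => Finset.range h), ∑ q' ∈ cube3 (2*(n:ℤ)),
        f (fun i => (h:ℤ) * q' i - (s i : ℤ)) := by
  rw [← Finset.sum_product']
  have e2 : ((n:ℤ) * (2*h)) / 2 = (n:ℤ) * h := by
    rw [show (n:ℤ) * (2*(h:ℤ)) = 2 * ((n:ℤ)*h) by ring]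
    exact Int.mul_ediv_cancel_left _ two_ne_zero
  have e1 : (-((n:ℤ) * (2*h))) / 2 = -((n:ℤ) * h) := by
    rw [show -((n:ℤ) * (2*(h:ℤ))) = 2 * (-((n:ℤ)*h)) by ring]
    exact Int.mul_ediv_cancel_left _ two_ne_zero
  have e3 : (2*(n:ℤ)) / 2 = (n:ℤ) := Int.mul_ediv_cancel_left _ two_ne_zero
  have e4 : (-(2*(n:ℤ))) / 2 = -(n:ℤ) := by
    rw [show -(2*(n:ℤ)) = 2 * (-(n:ℤ)) by ring]
    exact Int.mul_ediv_cancel_left _ two_ne_zero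
  have hhz : (h:ℤ) ≠ 0 := by exact_mod_cast hh.ne'
  have hmem : ∀ q : Fin 3 → ℤ, q ∈ cube3 ((n:ℤ) * (2*h)) ↔
      ∀ i, -((n:ℤ)*h) + 1 ≤ q i ∧ q i ≤ (n:ℤ)*h := by
    intro q
    simp only [cube3, Fintype.mem_piFinset, Finset.mem_Icc, e1, e2]
  have hmem2 : ∀ q : Fin 3 → ℤ, q ∈ cube3 (2*(n:ℤ)) ↔
      ∀ i, -(n:ℤ) + 1 ≤ q i ∧ q i ≤ (n:ℤ) := by
    intro q
    simp only [cube3, Fintype.mem_piFinset, Finset.mem_Icc, e3, e4]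
  refine Finset.sum_nbij' (fun q => (fun i => ((-q i) % (h:ℤ)).toNat, fun i => -((-q i) / (h:ℤ))))
    (fun sq => fun i => (h:ℤ) * sq.2 i - (sq.1 i : ℤ)) ?_ ?_ ?_ ?_ ?_
  · intro q hq
    rw [hmem] at hq
    rw [Finset.mem_product]
    constructor
    · rw [Fintype.mem_piFinset]
      intro i
      rw [Finset.mem_range]
      show ((-q i) % (h:ℤ)).toNat < h
      have h1 := Int.emod_nonneg (-q i) hhz
      have h2 := Int.emod_lt_of_pos (-q i) (Int.natCast_pos.mpr hh)
      omega
    · rw [hmem2]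
      intro i
      show -(n:ℤ) + 1 ≤ -((-q i) / (h:ℤ)) ∧ -((-q i) / (h:ℤ)) ≤ (n:ℤ)
      have hde := Int.mul_ediv_add_emod (-q i) (h:ℤ)
      have h1 := Int.emod_nonneg (-q i) hhz
      have h2 := Int.emod_lt_of_pos (-q i) (Int.natCast_pos.mpr hh)
      have hq' : q i = (h:ℤ) * (-((-q i) / (h:ℤ))) - ((-q i) % (h:ℤ)) := by linarith
      have := (key1 (n := n) (e := -((-q i) / (h:ℤ))) (s := ((-q i) % (h:ℤ)))
        (Int.natCast_pos.mpr hh) h1 h2).mp (by rw [← hq']; exact hq i)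
      exact this
  · intro sq hsq
    rw [Finset.mem_product] at hsq
    obtain ⟨hs, hq'⟩ := hsq
    rw [Fintype.mem_piFinset] at hs
    rw [hmem2] at hq'
    rw [hmem]
    intro i
    have hsi := hs i
    rw [Finset.mem_range] at hsi
    exact (key1 (Int.natCast_pos.mpr hh) (by positivity) (by exact_mod_cast hsi : (sq.1 i : ℤ) < (h:ℤ))).mpr (hq' i)
  · intro q hq
    funext i
    show (h:ℤ) * -(-q i / (h:ℤ)) - (((-q i % (h:ℤ)).toNat : ℕ) : ℤ) = q i
    have hde := Int.mul_ediv_add_emod (-q i) (h:ℤ)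
    have h1 := Int.emod_nonneg (-q i) hhz
    rw [Int.toNat_of_nonneg h1]
    linarith
  · intro sq hsq
    rw [Finset.mem_product] at hsq
    obtain ⟨hs, _⟩ := hsq
    rw [Fintype.mem_piFinset] at hs
    have harg : ∀ i, -((h:ℤ) * sq.2 i - (sq.1 i : ℤ)) = (sq.1 i : ℤ) + (h:ℤ) * (-sq.2 i) := by
      intro i; ring
    have hsi : ∀ i, 0 ≤ (sq.1 i : ℤ) ∧ (sq.1 i : ℤ) < (h:ℤ) := by
      intro i
      have := hs i
      rw [Finset.mem_range] at this
      constructor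
      · positivity
      · exact_mod_cast this
    have hmod : ∀ i, (-((h:ℤ) * sq.2 i - (sq.1 i : ℤ))) % (h:ℤ) = (sq.1 i : ℤ) := by
      intro i
      rw [harg i, Int.add_mul_emod_self_left]
      exact Int.emod_eq_of_lt (hsi i).1 (hsi i).2
    have hdiv : ∀ i, (-((h:ℤ) * sq.2 i - (sq.1 i : ℤ))) / (h:ℤ) = -sq.2 i := by
      intro i
      rw [harg i, Int.add_mul_ediv_left _ _ hhz]
      rw [Int.ediv_eq_zero_of_lt (hsi i).1 (hsi i).2]
      ring
    ext i
    · simp only [hmod]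
      exact Int.toNat_natCast _ ▸ rfl
    · simp only [hdiv, neg_neg]
  · intro q hq
    congr 1
    funext i
    show q i = (h:ℤ) * -(-q i / (h:ℤ)) - (((-q i % (h:ℤ)).toNat : ℕ) : ℤ)
    have hde := Int.mul_ediv_add_emod (-q i) (h:ℤ)
    have h1 := Int.emod_nonneg (-q i) hhz
    rw [Int.toNat_of_nonneg h1]
    linarith

lemma sub_cube (n : ℕ) (N : ℤ) (hN : (n:ℤ) ≤ N) : cube3 (n:ℤ) ⊆ cube3 N := by
  intro q hq
  simp only [cube3, Fintype.mem_piFinset, Finset.mem_Icc] at hq ⊢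
  intro i
  have := hq i
  omega

lemma expcomb (N : ℂ) (a b q : Fin 3 → ℤ) :
    Complex.exp (-(2 * (Real.pi : ℂ) * Complex.I * ((∑ i, b i * q i : ℤ) : ℂ) / N)) *
      Complex.exp (2 * (Real.pi : ℂ) * Complex.I * ((∑ i, a i * q i : ℤ) : ℂ) / N) =
    Complex.exp (2 * (Real.pi : ℂ) * Complex.I * ((∑ i, (a i - b i) * q i : ℤ) : ℂ) / N) := by
  rw [← Complex.exp_add]
  congr 1
  have hz : (∑ i, (a i - b i) * q i : ℤ) = (∑ i, a i * q i) - ∑ i, b i * q i := by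
    rw [← Finset.sum_sub_distrib]
    exact Finset.sum_congr rfl fun i _ => by ring
  rw [hz]
  push_cast
  ring

lemma lhs_eq (n p : ℕ) (hn : 0 < n) (hp : 0 < p)
    (ghat vp : (Fin 3 → ℤ) → ℂ)
    (hsupp : ∀ k : Fin 3 → ℤ, k ∉ cube3 (n : ℤ) → vp k = 0) (k : Fin 3 → ℤ) :
    idft3 ((n : ℤ) * p) (fun q => ghat q * dft3 ((n : ℤ) * p) vp q) k =
      ∑ l ∈ cube3 (n:ℤ), vp l * idft3 ((n : ℤ) * p) ghat (fun i => k i - l i) := by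
  have hsub : cube3 (n:ℤ) ⊆ cube3 ((n:ℤ)*p) := sub_cube n _ (by nlinarith [hp, hn])
  simp only [idft3]
  have step1 : ∀ q ∈ cube3 ((n:ℤ)*p),
      (ghat q * dft3 ((n:ℤ)*p) vp q) *
        Complex.exp (2 * (Real.pi : ℂ) * Complex.I * ((∑ i, k i * q i : ℤ) : ℂ) / (((n:ℤ)*p : ℤ) : ℂ)) =
      ∑ l ∈ cube3 (n:ℤ), vp l * (ghat q *
        Complex.exp (2 * (Real.pi : ℂ) * Complex.I * ((∑ i, (k i - l i) * q i : ℤ) : ℂ) / (((n:ℤ)*p : ℤ) : ℂ))) := by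
    intro q hq
    rw [dft3, ← Finset.sum_subset hsub (fun l _ hl => by rw [hsupp l hl]; ring)]
    rw [Finset.mul_sum, Finset.sum_mul]
    refine Finset.sum_congr rfl fun l _ => ?_
    have he := expcomb (((n:ℤ)*p : ℤ) : ℂ) k l q
    linear_combination (ghat q * vp l) * he
  rw [Finset.sum_congr rfl step1, Finset.sum_comm, Finset.mul_sum]
  refine Finset.sum_congr rfl fun l _ => ?_
  rw [Finset.mul_sum, Finset.mul_sum, Finset.mul_sum]
  exact Finset.sum_congr rfl fun q _ => by ring

lemma fold_eq (n p h : ℕ) (hn : 0 < n) (hh : 0 < h) (hp2 : p = 2 * h)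
    (ghat : (Fin 3 → ℤ) → ℂ) (m : Fin 3 → ℤ) :
    (8 / (p : ℂ) ^ 3) *
      ∑ s ∈ Fintype.piFinset (fun _ : Fin 3 => Finset.range (p / 2)),
        idft3 (2 * n) (fun q' => ghat fun i => (p : ℤ) / 2 * q' i - (s i : ℤ)) m *
          Complex.exp (-(2 * (Real.pi : ℂ) * Complex.I * ((∑ i, m i * (s i : ℤ) : ℤ) : ℂ) /
            ((n : ℂ) * (p : ℂ))))
      = idft3 ((n : ℤ) * p) ghat m := by
  subst hp2
  have hnC : (n:ℂ) ≠ 0 := by exact_mod_cast hn.ne'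
  have hhC : (h:ℂ) ≠ 0 := by exact_mod_cast hh.ne'
  have hph : (((2 * h : ℕ) : ℤ)) / 2 = (h:ℤ) := by push_cast; omega
  have hrange : (2 * h) / 2 = h := by omega
  rw [hrange]
  simp only [idft3, hph]
  rw [show ((n:ℤ) * ((2 * h : ℕ) : ℤ)) = ((n:ℤ) * (2 * (h:ℤ))) from by push_cast; ring]
  rw [reindex3 n h hn hh (fun q => ghat q *
    Complex.exp (2 * (Real.pi : ℂ) * Complex.I * ((∑ i, m i * q i : ℤ) : ℂ) /
      (((n:ℤ) * (2 * (h:ℤ)) : ℤ) : ℂ)))]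
  beta_reduce
  rw [Finset.mul_sum, Finset.mul_sum]
  refine Finset.sum_congr rfl fun s hs => ?_
  rw [Finset.mul_sum, Finset.sum_mul, Finset.mul_sum, Finset.mul_sum]
  refine Finset.sum_congr rfl fun q' hq' => ?_
  have hexp : Complex.exp (2 * (Real.pi : ℂ) * Complex.I *
        ((∑ i, m i * ((h:ℤ) * q' i - (s i : ℤ)) : ℤ) : ℂ) / (((n:ℤ) * (2 * (h:ℤ)) : ℤ) : ℂ))
      = Complex.exp (2 * (Real.pi : ℂ) * Complex.I * ((∑ i, m i * q' i : ℤ) : ℂ) /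
          ((2 * (n:ℤ) : ℤ) : ℂ)) *
        Complex.exp (-(2 * (Real.pi : ℂ) * Complex.I * ((∑ i, m i * (s i : ℤ) : ℤ) : ℂ) /
          ((n : ℂ) * ((2 * h : ℕ) : ℂ)))) := by
    rw [← Complex.exp_add]
    congr 1
    have hz : (∑ i, m i * ((h:ℤ) * q' i - (s i : ℤ)) : ℤ)
        = (h:ℤ) * (∑ i, m i * q' i) - ∑ i, m i * (s i : ℤ) := by
      rw [Finset.mul_sum, ← Finset.sum_sub_distrib]
      exact Finset.sum_congr rfl fun i _ => by ring
    rw [hz]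
    push_cast
    field_simp
    ring
  rw [hexp]
  push_cast
  field_simp
  ring

lemma orth3' (n : ℕ) (hn : 0 < n) (m : Fin 3 → ℤ) :
    ∑ q ∈ cube3 (2 * (n:ℤ)),
      Complex.exp (2 * (Real.pi : ℂ) * Complex.I * ((∑ i, m i * q i : ℤ) : ℂ) /
        ((2 * (n:ℤ) : ℤ) : ℂ)) =
      if ∀ i, (2 * (n:ℤ)) ∣ m i then ((2 * (n:ℤ) : ℤ) : ℂ) ^ 3 else 0 := by
  have hc : ((2 * (n:ℤ) : ℤ) : ℂ) = ((2 * n : ℕ) : ℂ) := by push_cast; ring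
  rw [hc]
  exact orth3 n hn m

lemma expcomb3 (N : ℂ) (a b c q : Fin 3 → ℤ) :
    Complex.exp (-(2 * (Real.pi : ℂ) * Complex.I * ((∑ i, b i * q i : ℤ) : ℂ) / N)) *
      Complex.exp (-(2 * (Real.pi : ℂ) * Complex.I * ((∑ i, c i * q i : ℤ) : ℂ) / N)) *
      Complex.exp (2 * (Real.pi : ℂ) * Complex.I * ((∑ i, a i * q i : ℤ) : ℂ) / N) =
    Complex.exp (2 * (Real.pi : ℂ) * Complex.I * ((∑ i, (a i - c i - b i) * q i : ℤ) : ℂ) / N) := by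
  rw [← Complex.exp_add, ← Complex.exp_add]
  congr 1
  have hz : (∑ i, (a i - c i - b i) * q i : ℤ)
      = (∑ i, a i * q i) - (∑ i, c i * q i) - ∑ i, b i * q i := by
    rw [← Finset.sum_sub_distrib, ← Finset.sum_sub_distrib]
    exact Finset.sum_congr rfl fun i _ => by ring
  rw [hz]
  push_cast
  ring

lemma rhs_eq (n : ℕ) (hn : 0 < n)
    (gm vp : (Fin 3 → ℤ) → ℂ)
    (hsupp : ∀ k : Fin 3 → ℤ, k ∉ cube3 (n : ℤ) → vp k = 0)
    (k : Fin 3 → ℤ) (hk : k ∈ cube3 (n:ℤ)) :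
    idft3 (2 * (n:ℤ)) (fun q => dft3 (2 * (n:ℤ)) gm q * dft3 (2 * (n:ℤ)) vp q) k =
      ∑ l ∈ cube3 (n:ℤ), vp l * gm (fun i => k i - l i) := by
  have hsub : cube3 (n:ℤ) ⊆ cube3 (2*(n:ℤ)) := sub_cube n _ (by omega)
  have hc2 : ((2 * (n:ℤ) : ℤ) : ℂ) ≠ 0 := by
    have : ((2 * (n:ℤ) : ℤ) : ℂ) = 2 * (n:ℂ) := by push_cast; ring
    rw [this]
    exact mul_ne_zero two_ne_zero (by exact_mod_cast hn.ne')
  simp only [idft3]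
  have step1 : ∀ q ∈ cube3 (2*(n:ℤ)),
      (dft3 (2*(n:ℤ)) gm q * dft3 (2*(n:ℤ)) vp q) *
        Complex.exp (2 * (Real.pi : ℂ) * Complex.I * ((∑ i, k i * q i : ℤ) : ℂ) /
          ((2 * (n:ℤ) : ℤ) : ℂ)) =
      ∑ l ∈ cube3 (n:ℤ), ∑ m ∈ cube3 (2*(n:ℤ)), (gm m * vp l) *
        Complex.exp (2 * (Real.pi : ℂ) * Complex.I * ((∑ i, (k i - l i - m i) * q i : ℤ) : ℂ) /
          ((2 * (n:ℤ) : ℤ) : ℂ)) := by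
    intro q hq
    rw [dft3, dft3, ← Finset.sum_subset hsub
      (f := fun l => vp l * Complex.exp (-(2 * (Real.pi : ℂ) * Complex.I *
        ((∑ i, l i * q i : ℤ) : ℂ) / ((2 * (n:ℤ) : ℤ) : ℂ))))
      (fun l _ hl => by simp [hsupp l hl])]
    rw [Finset.sum_mul_sum]
    simp only [Finset.sum_mul]
    rw [Finset.sum_comm]
    refine Finset.sum_congr rfl fun l _ => ?_
    refine Finset.sum_congr rfl fun m _ => ?_
    have he := expcomb3 ((2 * (n:ℤ) : ℤ) : ℂ) k m l q
    linear_combination (gm m * vp l) * he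
  rw [Finset.sum_congr rfl step1, Finset.sum_comm, Finset.mul_sum]
  refine Finset.sum_congr rfl fun l hl => ?_
  rw [Finset.sum_comm]
  have horth : ∀ m : Fin 3 → ℤ,
      ∑ q ∈ cube3 (2*(n:ℤ)), (gm m * vp l) *
        Complex.exp (2 * (Real.pi : ℂ) * Complex.I * ((∑ i, (k i - l i - m i) * q i : ℤ) : ℂ) /
          ((2 * (n:ℤ) : ℤ) : ℂ)) =
      (gm m * vp l) *
        (if ∀ i, (2 * (n:ℤ)) ∣ (k i - l i - m i) then ((2 * (n:ℤ) : ℤ) : ℂ) ^ 3 else 0) := by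
    intro m
    rw [← Finset.mul_sum, orth3' n hn (fun i => k i - l i - m i)]
  rw [Finset.sum_congr rfl fun m _ => horth m]
  have hkb : ∀ i, -(n:ℤ)/2 + 1 ≤ k i ∧ k i ≤ (n:ℤ)/2 := by
    intro i
    have := hk
    simp only [cube3, Fintype.mem_piFinset, Finset.mem_Icc] at this
    exact this i
  have hlb : ∀ i, -(n:ℤ)/2 + 1 ≤ l i ∧ l i ≤ (n:ℤ)/2 := by
    simp only [cube3, Fintype.mem_piFinset, Finset.mem_Icc] at hl
    exact hl
  have hm0 : (fun i => k i - l i) ∈ cube3 (2*(n:ℤ)) := by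
    simp only [cube3, Fintype.mem_piFinset, Finset.mem_Icc]
    intro i
    have h1 := hkb i
    have h2 := hlb i
    omega
  rw [Finset.sum_eq_single (fun i => k i - l i)
    (fun m hm hne => by
      rw [if_neg, mul_zero]
      intro hall
      apply hne
      funext i
      simp only [cube3, Fintype.mem_piFinset, Finset.mem_Icc] at hm
      have h1 := hkb i
      have h2 := hlb i
      have h3 := hm i
      have h4 := small_dvd_zero (by positivity) (hall i) (by omega) (by omega)
      omega)
    (fun hnot => absurd hm0 hnot)]
  rw [if_pos (fun i => by simp)]
  have hnC : (n:ℂ) ≠ 0 := by exact_mod_cast hn.ne'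
  field_simp

/-- Proposition 1, 3D: the p-fold padded filtering F⁻¹(ĝ_t ⊙ F v_p) can be
computed on the twofold-padded grid with the modified kernel g^m_t. -/
theorem dft_folding_3d
    (n p : ℕ) (hn : 0 < n) (hp : 0 < p) (hne : Even n) (hpe : Even p)
    (ghat vp : (Fin 3 → ℤ) → ℂ)
    (hsupp : ∀ k : Fin 3 → ℤ, k ∉ cube3 (n : ℤ) → vp k = 0)
    (gm : (Fin 3 → ℤ) → ℂ)
    (hgm : ∀ k : Fin 3 → ℤ, gm k = (8 / (p : ℂ) ^ 3) *
      ∑ s ∈ Fintype.piFinset (fun _ : Fin 3 => Finset.range (p / 2)),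
        idft3 (2 * n) (fun q' => ghat fun i => (p : ℤ) / 2 * q' i - (s i : ℤ)) k *
          Complex.exp (-(2 * (Real.pi : ℂ) * Complex.I * ((∑ i, k i * (s i : ℤ) : ℤ) : ℂ) /
            ((n : ℂ) * (p : ℂ)))) ) :
    ∀ k ∈ cube3 (n : ℤ),
      idft3 ((n : ℤ) * p) (fun q => ghat q * dft3 ((n : ℤ) * p) vp q) k =
        idft3 (2 * n) (fun q => dft3 (2 * n) gm q * dft3 (2 * n) vp q) k := by

  intro k hk
  obtain ⟨h, hph⟩ := hpe
  have hp2 : p = 2 * h := by omega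
  have hh : 0 < h := by omega
  rw [lhs_eq n p hn hp ghat vp hsupp k, rhs_eq n hn gm vp hsupp k hk]
  refine Finset.sum_congr rfl fun l _ => ?_
  congr 1
  rw [hgm (fun i => k i - l i)]
  exact (fold_eq n p h hn hh hp2 ghat (fun i => k i - l i)).symm
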